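/- Let d, n, v, D_0 ≥ 1 be integers, let D_j = 6^j·D_0 for every j ≥ 1, and let A ⊆ Z_n^d. Assume A_0 ⊆ A satisfies |A_0| ≥ 8v·(6n/D_0)^d, and that C_0 is a partition of A_0 such that every cluster C ∈ C_0 is ⌊D_0/(12v)⌋-connected and satisfies |C| ≥ v. Then (A_0, C_0) can be completed into a (v, D)-dormitory hierarchy (A_j, C_j)_{j ≤ J} on A such that |A_J| ≥ |A_0| − 4v·(6n/D_0)^d. -/

import Mathlib

/-- The distance on the torus `(ℤ/nℤ)^d`: the infimum of the sup-norm distances between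
integer lifts of the two points. -/
noncomputable def torusDist {d n : ℕ} (x y : Fin d → ZMod n) : ℕ :=
  sInf {k : ℕ | ∃ a b : Fin d → ℤ,
    (∀ i, (a i : ZMod n) = x i) ∧ (∀ i, (b i : ZMod n) = y i) ∧
    (Finset.univ.sup fun i => (a i - b i).natAbs) = k}

/-- The closed ball of radius `r` around `x` in the torus `(ℤ/nℤ)^d`. -/
def torusBall {d n : ℕ} (x : Fin d → ZMod n) (r : ℕ) : Set (Fin d → ZMod n) :=
  {y | torusDist x y ≤ r}

/-- A set `C ⊆ (ℤ/nℤ)^d` is `r`-connected if any two of its points can be joined by a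
finite sequence of points of `C` whose consecutive terms are at distance at most `r`. -/
def torusRConnected {d n : ℕ} (r : ℕ) (C : Set (Fin d → ZMod n)) : Prop :=
  ∀ x ∈ C, ∀ y ∈ C, ∃ (k : ℕ) (f : ℕ → Fin d → ZMod n),
    f 0 = x ∧ f k = y ∧ (∀ j ≤ k, f j ∈ C) ∧ ∀ j < k, torusDist (f j) (f (j + 1)) ≤ r

/-- The diameter of a subset of the torus `(ℤ/nℤ)^d`. -/
noncomputable def torusDiam {d n : ℕ} (C : Set (Fin d → ZMod n)) : ℕ :=
  sSup {k : ℕ | ∃ x ∈ C, ∃ y ∈ C, torusDist x y = k}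

/-- `𝒞` is a partition of the set `A`: its members are non-empty, pairwise disjoint,
and their union is `A`. -/
def IsPartitionOf {α : Type*} (𝒞 : Set (Set α)) (A : Set α) : Prop :=
  (∀ C ∈ 𝒞, C.Nonempty) ∧ ⋃₀ 𝒞 = A ∧
    ∀ C ∈ 𝒞, ∀ C' ∈ 𝒞, C ≠ C' → Disjoint C C'

/-- A `(v, D)`-dormitory hierarchy on a set `A ⊆ (ℤ/nℤ)^d`: a decreasing sequence of
subsets `A ⊇ A_0 ⊇ ⋯ ⊇ A_J` together with partitions `𝒞_j` of `A_j` such that: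
(i) every cluster `C ∈ 𝒞_j` satisfies `|C| ≥ 2^⌊j/2⌋ v`;
(ii) every cluster `C ∈ 𝒞_{j+1} \ 𝒞_j` has diameter at most `D j` and is the union of
two clusters of `𝒞_j`;
(iii) the last partition `𝒞_J` consists of a single set. -/
structure DormitoryHierarchy (d n v : ℕ) (D : ℕ → ℕ) (A : Set (Fin d → ZMod n)) where
  J : ℕ
  level : ℕ → Set (Fin d → ZMod n)
  part : ℕ → Set (Set (Fin d → ZMod n))
  level_zero_subset : level 0 ⊆ A
  level_antitone : ∀ j, j + 1 ≤ J → level (j + 1) ⊆ level j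
  part_isPartition : ∀ j ≤ J, IsPartitionOf (part j) (level j)
  card_ge : ∀ j ≤ J, ∀ C ∈ part j, 2 ^ (j / 2) * v ≤ C.ncard
  merge : ∀ j, j + 1 ≤ J → ∀ C ∈ part (j + 1), C ∉ part j →
    torusDiam C ≤ D j ∧ ∃ C₀ ∈ part j, ∃ C₁ ∈ part j, C = C₀ ∪ C₁
  final : ∃ C, part J = {C}

namespace TorusAux


variable {d n : ℕ}

lemma exists_lift (hn : 1 ≤ n) (x : Fin d → ZMod n) :
    ∃ a : Fin d → ℤ, ∀ i, ((a i : ℤ) : ZMod n) = x i := by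
  haveI : NeZero n := ⟨by omega⟩
  refine ⟨fun i => ((x i).val : ℤ), fun i => ?_⟩
  simp [ZMod.natCast_val, ZMod.cast_id]

lemma torusDist_le'' (x y : Fin d → ZMod n) (a b : Fin d → ℤ)
    (ha : ∀ i, (a i : ZMod n) = x i) (hb : ∀ i, (b i : ZMod n) = y i) :
    torusDist x y ≤ Finset.univ.sup fun i => (a i - b i).natAbs :=
  Nat.sInf_le ⟨a, b, ha, hb, rfl⟩

lemma torusDist_spec (hn : 1 ≤ n) (x y : Fin d → ZMod n) :
    ∃ a b : Fin d → ℤ, (∀ i, (a i : ZMod n) = x i) ∧ (∀ i, (b i : ZMod n) = y i) ∧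
      (Finset.univ.sup fun i => (a i - b i).natAbs) = torusDist x y := by
  have hne : {k : ℕ | ∃ a b : Fin d → ℤ,
      (∀ i, (a i : ZMod n) = x i) ∧ (∀ i, (b i : ZMod n) = y i) ∧
      (Finset.univ.sup fun i => (a i - b i).natAbs) = k}.Nonempty := by
    obtain ⟨a, ha⟩ := exists_lift hn x
    obtain ⟨b, hb⟩ := exists_lift hn y
    exact ⟨_, a, b, ha, hb, rfl⟩
  exact Nat.sInf_mem hne

lemma torusDist_symm' (hn : 1 ≤ n) (x y : Fin d → ZMod n) : torusDist x y = torusDist y x := by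
  have key : ∀ u w : Fin d → ZMod n, torusDist u w ≤ torusDist w u := by
    intro u w
    obtain ⟨a, b, ha, hb, hs⟩ := torusDist_spec hn w u
    calc torusDist u w ≤ Finset.univ.sup fun i => (b i - a i).natAbs :=
          torusDist_le'' u w b a hb ha
      _ = Finset.univ.sup fun i => (a i - b i).natAbs := by
          congr 1; funext i; omega
      _ = torusDist w u := hs
  exact le_antisymm (key x y) (key y x)

lemma torusDist_triangle' (hn : 1 ≤ n) (x y z : Fin d → ZMod n) :
    torusDist x z ≤ torusDist x y + torusDist y z := by
  obtain ⟨a, b, ha, hb, hab⟩ := torusDist_spec hn x y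
  obtain ⟨b', c, hb', hc, hbc⟩ := torusDist_spec hn y z
  set c' : Fin d → ℤ := fun i => c i + (b i - b' i) with hc'def
  have hc' : ∀ i, ((c' i : ℤ) : ZMod n) = z i := by
    intro i
    push_cast [hc'def]
    rw [hc i, hb i, hb' i]; ring
  calc torusDist x z ≤ Finset.univ.sup fun i => (a i - c' i).natAbs :=
        torusDist_le'' x z a c' ha hc'
    _ ≤ torusDist x y + torusDist y z := by
        rw [← hab, ← hbc]
        apply Finset.sup_le
        intro i _
        have h1 : (a i - c' i).natAbs = ((a i - b i) + (b' i - c i)).natAbs := by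
          congr 1; simp [hc'def]; ring
        rw [h1]
        calc ((a i - b i) + (b' i - c i)).natAbs
            ≤ (a i - b i).natAbs + (b' i - c i).natAbs := Int.natAbs_add_le _ _
          _ ≤ _ := add_le_add
              (Finset.le_sup (f := fun i => (a i - b i).natAbs) (Finset.mem_univ i))
              (Finset.le_sup (f := fun i => (b' i - c i).natAbs) (Finset.mem_univ i))

lemma torusDist_le_n_sub_one' (hn : 1 ≤ n) (x y : Fin d → ZMod n) :
    torusDist x y ≤ n - 1 := by
  haveI : NeZero n := ⟨by omega⟩
  have := torusDist_le'' x y (fun i => ((x i).val : ℤ)) (fun i => ((y i).val : ℤ))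
    (fun i => by simp [ZMod.natCast_val, ZMod.cast_id])
    (fun i => by simp [ZMod.natCast_val, ZMod.cast_id])
  refine this.trans ?_
  apply Finset.sup_le
  intro i _
  have h1 : (x i).val < n := ZMod.val_lt _
  have h2 : (y i).val < n := ZMod.val_lt _
  show ((((x i).val : ℤ)) - (((y i).val : ℤ))).natAbs ≤ n - 1
  omega

lemma torusDist_self' (hn : 1 ≤ n) (x : Fin d → ZMod n) : torusDist x x = 0 := by
  obtain ⟨a, ha⟩ := exists_lift hn x
  have h := torusDist_le'' x x a a ha ha
  have h2 : torusDist x x ≤ 0 := le_trans h (Finset.sup_le fun i _ => by simp)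
  omega


lemma torusDiam_le {C : Set (Fin d → ZMod n)} {m : ℕ}
    (h : ∀ x ∈ C, ∀ y ∈ C, torusDist x y ≤ m) : torusDiam C ≤ m := by
  rcases Set.eq_empty_or_nonempty {k : ℕ | ∃ x ∈ C, ∃ y ∈ C, torusDist x y = k} with he | hne
  · rw [torusDiam, he, csSup_empty]; exact Nat.zero_le _
  · exact csSup_le hne (by rintro k ⟨x, hx, y, hy, rfl⟩; exact h x hx y hy)

lemma dist_le_torusDiam (hn : 1 ≤ n) {C : Set (Fin d → ZMod n)} {x y : Fin d → ZMod n}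
    (hx : x ∈ C) (hy : y ∈ C) : torusDist x y ≤ torusDiam C := by
  apply le_csSup
  · exact ⟨n - 1, by rintro k ⟨a, ha, b, hb, rfl⟩; exact torusDist_le_n_sub_one' hn a b⟩
  · exact ⟨x, hx, y, hy, rfl⟩

lemma torusDiam_le_n_sub_one (hn : 1 ≤ n) (C : Set (Fin d → ZMod n)) :
    torusDiam C ≤ n - 1 :=
  torusDiam_le fun x _ y _ => torusDist_le_n_sub_one' hn x y

lemma torusDiam_union (hn : 1 ≤ n) {C₀ C₁ : Set (Fin d → ZMod n)} {p q : Fin d → ZMod n}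
    (hp : p ∈ C₀) (hq : q ∈ C₁) :
    torusDiam (C₀ ∪ C₁) ≤ torusDiam C₀ + torusDist p q + torusDiam C₁ := by
  apply torusDiam_le
  rintro x (hx | hx) y (hy | hy)
  · calc torusDist x y ≤ torusDiam C₀ := dist_le_torusDiam hn hx hy
      _ ≤ _ := by omega
  · calc torusDist x y ≤ torusDist x p + torusDist p y := torusDist_triangle' hn _ _ _
      _ ≤ torusDist x p + (torusDist p q + torusDist q y) :=
          Nat.add_le_add_left (torusDist_triangle' hn _ _ _) _
      _ ≤ torusDiam C₀ + (torusDist p q + torusDiam C₁) := by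
          have h1 : torusDist x p ≤ torusDiam C₀ := dist_le_torusDiam hn hx hp
          have h2 : torusDist q y ≤ torusDiam C₁ := dist_le_torusDiam hn hq hy
          omega
      _ = _ := by ring
  · rw [torusDist_symm' hn x y]
    calc torusDist y x ≤ torusDist y p + torusDist p x := torusDist_triangle' hn _ _ _
      _ ≤ torusDist y p + (torusDist p q + torusDist q x) :=
          Nat.add_le_add_left (torusDist_triangle' hn _ _ _) _
      _ ≤ torusDiam C₀ + (torusDist p q + torusDiam C₁) := by
          have h1 : torusDist y p ≤ torusDiam C₀ := dist_le_torusDiam hn hy hp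
          have h2 : torusDist q x ≤ torusDiam C₁ := dist_le_torusDiam hn hq hx
          omega
      _ = _ := by ring
  · calc torusDist x y ≤ torusDiam C₁ := dist_le_torusDiam hn hx hy
      _ ≤ _ := by omega


lemma dist_le_of_path (hn : 1 ≤ n) {r : ℕ} :
    ∀ (k : ℕ) (f : ℕ → Fin d → ZMod n),
      (∀ j < k, torusDist (f j) (f (j + 1)) ≤ r) → torusDist (f 0) (f k) ≤ k * r := by
  intro k
  induction k with
  | zero => intro f _; simp [torusDist_self' hn]
  | succ m ih =>
    intro f hf
    calc torusDist (f 0) (f (m + 1)) ≤ torusDist (f 0) (f m) + torusDist (f m) (f (m+1)) :=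
          torusDist_triangle' hn _ _ _
      _ ≤ m * r + r := add_le_add (ih f (fun j hj => hf j (by omega))) (hf m (by omega))
      _ = (m + 1) * r := by ring

lemma dist_le_card_mul' (hn : 1 ≤ n) {r : ℕ} {C : Set (Fin d → ZMod n)}
    (hconn : torusRConnected r C) {x y : Fin d → ZMod n} (hx : x ∈ C) (hy : y ∈ C) :
    torusDist x y ≤ (C.ncard - 1) * r := by
  haveI : NeZero n := ⟨by omega⟩
  classical
  have hP : ∃ k : ℕ, ∃ f : ℕ → Fin d → ZMod n,
      f 0 = x ∧ f k = y ∧ (∀ j ≤ k, f j ∈ C) ∧ ∀ j < k, torusDist (f j) (f (j + 1)) ≤ r :=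
    hconn x hx y hy
  set k₀ := Nat.find hP with hk₀def
  obtain ⟨f, hf0, hfk, hfmem, hfstep⟩ := Nat.find_spec hP
  rw [← hk₀def] at hfk hfmem hfstep
  -- injectivity of f on [0, k₀]
  have hinj : ∀ a ≤ k₀, ∀ b ≤ k₀, a < b → f a ≠ f b := by
    intro a ha b hb hab heq
    set k' := k₀ - (b - a) with hk'
    have hk'lt : k' < k₀ := by omega
    apply Nat.find_min hP hk'lt
    refine ⟨fun j => if j ≤ a then f j else f (j + (b - a)), ?_, ?_, ?_, ?_⟩
    · simp [hf0]
    · by_cases hc : k' ≤ a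
      · have hba : b = k₀ := by omega
        have hk'a : k' = a := by omega
        simp only [hk'a, le_refl, if_pos]
        rw [heq, hba, hfk]
      · simp only [if_neg hc]
        have h9 : k' + (b - a) = k₀ := by omega
        rw [h9, hfk]
    · intro j hj
      by_cases hc : j ≤ a
      · simp only [if_pos hc]; exact hfmem j (by omega)
      · simp only [if_neg hc]; exact hfmem _ (by omega)
    · intro j hj
      by_cases hc : j + 1 ≤ a
      · simp only [if_pos hc, if_pos (by omega : j ≤ a)]
        exact hfstep j (by omega)
      · by_cases hc2 : j ≤ a
        · have hja : j = a := by omega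
          simp only [if_pos hc2, if_neg hc]
          rw [hja, heq]
          have h9 : a + 1 + (b - a) = b + 1 := by omega
          rw [h9]
          exact hfstep b (by omega)
        · simp only [if_neg hc2, if_neg hc]
          have h9 : j + 1 + (b - a) = j + (b - a) + 1 := by omega
          rw [h9]
          exact hfstep _ (by omega)
  -- k₀ + 1 ≤ C.ncard
  have hcard : k₀ + 1 ≤ C.ncard := by
    classical
    have hCfin : C.Finite := Set.toFinite C
    have hsub : (Finset.range (k₀ + 1)).image f ⊆ hCfin.toFinset := by
      intro z hz
      simp only [Finset.mem_image, Finset.mem_range] at hz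
      obtain ⟨j, hj, rfl⟩ := hz
      simp only [Set.Finite.mem_toFinset]
      exact hfmem j (by omega)
    have hcardim : ((Finset.range (k₀ + 1)).image f).card = k₀ + 1 := by
      rw [Finset.card_image_of_injOn, Finset.card_range]
      intro a ha b hb hab
      simp only [Finset.coe_range, Set.mem_Iio] at ha hb
      by_contra hne
      rcases Nat.lt_or_ge a b with h | h
      · exact hinj a (by omega) b (by omega) h hab
      · exact hinj b (by omega) a (by omega) (by omega) hab.symm
    calc k₀ + 1 = ((Finset.range (k₀ + 1)).image f).card := hcardim.symm
      _ ≤ hCfin.toFinset.card := Finset.card_le_card hsub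
      _ = C.ncard := (Set.ncard_eq_toFinset_card C hCfin).symm
  calc torusDist x y = torusDist (f 0) (f k₀) := by rw [hf0, hfk]
    _ ≤ k₀ * r := dist_le_of_path hn k₀ f hfstep
    _ ≤ (C.ncard - 1) * r := Nat.mul_le_mul_right _ (by omega)


lemma separated_ncard_le (hn : 1 ≤ n) (s : ℕ) (P : Set (Fin d → ZMod n))
    (hsep : ∀ x ∈ P, ∀ y ∈ P, x ≠ y → s < torusDist x y) :
    P.ncard ≤ ((n + s) / (s + 1)) ^ d := by
  haveI : NeZero n := ⟨by omega⟩
  classical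
  set M := (n + s) / (s + 1) with hM
  have hbnd : ∀ x : Fin d → ZMod n, ∀ i, (x i).val / (s + 1) < M := by
    intro x i
    have h1 : (x i).val < n := ZMod.val_lt _
    have h2 : (x i).val / (s+1) ≤ (n - 1) / (s+1) := Nat.div_le_div_right (by omega)
    have h3 : (n - 1) / (s+1) < M := by
      rw [hM]
      have h4 : (n - 1 + (s+1)) / (s+1) = (n-1)/(s+1) + 1 := Nat.add_div_right _ (by omega)
      have h5 : n - 1 + (s+1) = n + s := by omega
      rw [h5] at h4
      omega
    omega
  set F : (Fin d → ZMod n) → (Fin d → Fin M) := fun x i => ⟨(x i).val / (s+1), hbnd x i⟩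
    with hF
  have hinjF : Set.InjOn F P := by
    intro x hx y hy hxy
    by_contra hne
    have hclose : torusDist x y ≤ s := by
      refine le_trans (torusDist_le'' x y (fun i => ((x i).val : ℤ))
        (fun i => ((y i).val : ℤ))
        (fun i => by simp [ZMod.natCast_val, ZMod.cast_id])
        (fun i => by simp [ZMod.natCast_val, ZMod.cast_id])) ?_
      apply Finset.sup_le
      intro i _
      have hqe : (x i).val / (s+1) = (y i).val / (s+1) := by
        have := congrFun hxy i
        simpa [hF, Fin.ext_iff] using this
      have h1 : (x i).val = (s+1) * ((x i).val/(s+1)) + (x i).val % (s+1) :=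
        (Nat.div_add_mod _ _).symm
      have h2 : (y i).val = (s+1) * ((y i).val/(s+1)) + (y i).val % (s+1) :=
        (Nat.div_add_mod _ _).symm
      rw [hqe] at h1
      have h3 : (x i).val % (s+1) < s+1 := Nat.mod_lt _ (by omega)
      have h4 : (y i).val % (s+1) < s+1 := Nat.mod_lt _ (by omega)
      set t := (s+1) * ((y i).val / (s+1)) with ht
      clear_value t
      show (((x i).val : ℤ) - ((y i).val : ℤ)).natAbs ≤ s
      omega
    exact absurd hclose (by have := hsep x hx y hy hne; omega)
  calc P.ncard = (F '' P).ncard := (Set.ncard_image_of_injOn hinjF).symm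
    _ ≤ (Set.univ : Set (Fin d → Fin M)).ncard :=
        Set.ncard_le_ncard (Set.subset_univ _) (Set.toFinite _)
    _ = M ^ d := by
        rw [Set.ncard_univ, Nat.card_eq_fintype_card]
        simp

lemma ncard_sUnion_le {α : Type*} [Finite α] (S : Set (Set α)) (K : ℕ) :
    (∀ C ∈ S, C.ncard ≤ K) → (⋃₀ S).ncard ≤ S.ncard * K := by
  refine Set.Finite.induction_on
    (motive := fun S _ => (∀ C ∈ S, C.ncard ≤ K) → (⋃₀ S).ncard ≤ S.ncard * K)
    S (Set.toFinite S) (by simp) ?_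
  intro C S hCS hSfin ih h
  rw [Set.sUnion_insert]
  calc (C ∪ ⋃₀ S).ncard ≤ C.ncard + (⋃₀ S).ncard := Set.ncard_union_le _ _
    _ ≤ K + S.ncard * K := add_le_add (h C (Set.mem_insert _ _))
        (ih fun C' hC' => h C' (Set.mem_insert_of_mem _ hC'))
    _ = (S.ncard + 1) * K := by ring
    _ = (insert C S).ncard * K := by
        rw [Set.ncard_insert_of_notMem hCS hSfin]

lemma exists_matching {β : Type*} [Finite β] (adj : β → β → Prop)
    (hsym : ∀ a b, adj a b → adj b a) (hirr : ∀ a, ¬ adj a a) (S : Set β) :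
    ∃ M : Set (β × β),
      (∀ z ∈ M, z.1 ∈ S ∧ z.2 ∈ S ∧ adj z.1 z.2) ∧
      (∀ z ∈ M, ∀ z' ∈ M, z ≠ z' → z.1 ≠ z'.1 ∧ z.1 ≠ z'.2 ∧ z.2 ≠ z'.1 ∧ z.2 ≠ z'.2) ∧
      (∀ x ∈ S, ∀ y ∈ S, (∀ z ∈ M, x ≠ z.1 ∧ x ≠ z.2) → (∀ z ∈ M, y ≠ z.1 ∧ y ≠ z.2) →
        x ≠ y → ¬ adj x y) := by
  classical
  have key : ∀ m : ℕ, ∀ S : Set β, S.ncard ≤ m → ∃ M : Set (β × β),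
      (∀ z ∈ M, z.1 ∈ S ∧ z.2 ∈ S ∧ adj z.1 z.2) ∧
      (∀ z ∈ M, ∀ z' ∈ M, z ≠ z' → z.1 ≠ z'.1 ∧ z.1 ≠ z'.2 ∧ z.2 ≠ z'.1 ∧ z.2 ≠ z'.2) ∧
      (∀ x ∈ S, ∀ y ∈ S, (∀ z ∈ M, x ≠ z.1 ∧ x ≠ z.2) → (∀ z ∈ M, y ≠ z.1 ∧ y ≠ z.2) →
        x ≠ y → ¬ adj x y) := by
    intro m
    induction m with
    | zero =>
      intro S hS
      have : S = ∅ := by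
        rw [← Set.ncard_eq_zero (Set.toFinite S)]; omega
      subst this
      exact ⟨∅, by simp, by simp, by simp⟩
    | succ m ih =>
      intro S hS
      by_cases hadj : ∃ x ∈ S, ∃ y ∈ S, adj x y
      · obtain ⟨x, hx, y, hy, hxy⟩ := hadj
        have hne : x ≠ y := fun h => hirr x (h ▸ hxy)
        have hcard : (S \ {x, y}).ncard ≤ m := by
          have h1 : (S \ {x, y}).ncard < S.ncard := by
            apply Set.ncard_lt_ncard _ (Set.toFinite S)
            constructor
            · exact Set.diff_subset
            · intro hsub
              exact (hsub hx).2 (by simp)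
          omega
        obtain ⟨M', hM1, hM2, hM3⟩ := ih (S \ {x, y}) hcard
        refine ⟨insert (x, y) M', ?_, ?_, ?_⟩
        · rintro z (rfl | hz)
          · exact ⟨hx, hy, hxy⟩
          · obtain ⟨h1, h2, h3⟩ := hM1 z hz
            exact ⟨h1.1, h2.1, h3⟩
        · rintro z (rfl | hz) z' (rfl | hz') hne'
          · exact absurd rfl hne'
          · obtain ⟨h1, h2, _⟩ := hM1 z' hz'
            have e1 : z'.1 ≠ x ∧ z'.1 ≠ y := by
              have := h1.2; simp at this; tauto
            have e2 : z'.2 ≠ x ∧ z'.2 ≠ y := by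
              have := h2.2; simp at this; tauto
            exact ⟨fun h => e1.1 h.symm, fun h => e2.1 h.symm,
              fun h => e1.2 h.symm, fun h => e2.2 h.symm⟩
          · obtain ⟨h1, h2, _⟩ := hM1 z hz
            have e1 : z.1 ≠ x ∧ z.1 ≠ y := by
              have := h1.2; simp at this; tauto
            have e2 : z.2 ≠ x ∧ z.2 ≠ y := by
              have := h2.2; simp at this; tauto
            exact ⟨e1.1, e1.2, e2.1, e2.2⟩
          · exact hM2 z hz z' hz' hne'
        · intro a ha b hb hua hub hab
          have hax : a ≠ x ∧ a ≠ y := by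
            have := hua (x, y) (Set.mem_insert _ _); exact this
          have hbx : b ≠ x ∧ b ≠ y := by
            have := hub (x, y) (Set.mem_insert _ _); exact this
          apply hM3 a (by simp [ha, hax.1, hax.2]) b (by simp [hb, hbx.1, hbx.2])
          · intro z hz; exact hua z (Set.mem_insert_of_mem _ hz)
          · intro z hz; exact hub z (Set.mem_insert_of_mem _ hz)
          · exact hab
      · push_neg at hadj
        exact ⟨∅, by simp, by simp, fun x hx y hy _ _ _ => hadj x hx y hy⟩
  exact key (S.ncard) S le_rfl


/-- One merging/discarding step on a partition. -/
lemma step_lemma {α : Type*} (𝒬 : Set (Set α)) (A : Set α) (hp : IsPartitionOf 𝒬 A)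
    (M : Set (Set α × Set α))
    (hM : ∀ z ∈ M, z.1 ∈ 𝒬 ∧ z.2 ∈ 𝒬 ∧ z.1 ≠ z.2)
    (hMd : ∀ z ∈ M, ∀ z' ∈ M, z ≠ z' → z.1 ≠ z'.1 ∧ z.1 ≠ z'.2 ∧ z.2 ≠ z'.1 ∧ z.2 ≠ z'.2)
    (Dset : Set (Set α)) (hDsub : Dset ⊆ 𝒬)
    (hDM : ∀ C ∈ Dset, ∀ z ∈ M, C ≠ z.1 ∧ C ≠ z.2) :
    IsPartitionOf
      ((𝒬 \ (Dset ∪ {C | ∃ z ∈ M, C = z.1 ∨ C = z.2})) ∪ {U | ∃ z ∈ M, U = z.1 ∪ z.2})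
      (A \ ⋃₀ Dset) := by
  obtain ⟨hne, hun, hdisj⟩ := hp
  refine ⟨?_, ?_, ?_⟩
  · rintro C (⟨hC, -⟩ | ⟨z, hz, rfl⟩)
    · exact hne C hC
    · exact ((hne _ ((hM z hz).1)).mono Set.subset_union_left)
  · apply Set.eq_of_subset_of_subset
    · rintro x hx
      obtain ⟨U, hU, hxU⟩ := Set.mem_sUnion.mp hx
      simp only [Set.mem_diff]
      rcases hU with ⟨hC𝒬, hCnot⟩ | ⟨z, hz, rfl⟩
      · constructor
        · rw [← hun]; exact ⟨U, hC𝒬, hxU⟩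
        · rintro ⟨E, hE, hxE⟩
          have hCE : U ≠ E := by
            rintro rfl; exact hCnot (Set.mem_union_left _ hE)
          exact Set.disjoint_left.mp (hdisj U hC𝒬 E (hDsub hE) hCE) hxU hxE
      · obtain ⟨h1, h2, h3⟩ := hM z hz
        rcases hxU with hx1 | hx2
        · constructor
          · rw [← hun]; exact ⟨z.1, h1, hx1⟩
          · rintro ⟨E, hE, hxE⟩
            exact Set.disjoint_left.mp
              (hdisj z.1 h1 E (hDsub hE) (fun h => (hDM E hE z hz).1 h.symm)) hx1 hxE
        · constructor
          · rw [← hun]; exact ⟨z.2, h2, hx2⟩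
          · rintro ⟨E, hE, hxE⟩
            exact Set.disjoint_left.mp
              (hdisj z.2 h2 E (hDsub hE) (fun h => (hDM E hE z hz).2 h.symm)) hx2 hxE
    · rintro x ⟨hxA, hxD⟩
      rw [← hun] at hxA
      obtain ⟨C, hC, hxC⟩ := hxA
      by_cases hCD : C ∈ Dset
      · exact absurd ⟨C, hCD, hxC⟩ hxD
      by_cases hCt : C ∈ {C | ∃ z ∈ M, C = z.1 ∨ C = z.2}
      · obtain ⟨z, hz, hC12⟩ := hCt
        refine Set.mem_sUnion.mpr ⟨z.1 ∪ z.2, Set.mem_union_right _ ⟨z, hz, rfl⟩, ?_⟩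
        rcases hC12 with rfl | rfl
        · exact Set.mem_union_left _ hxC
        · exact Set.mem_union_right _ hxC
      · exact Set.mem_sUnion.mpr ⟨C, Set.mem_union_left _ ⟨hC, by
          rintro (h | h); exacts [hCD h, hCt h]⟩, hxC⟩
  · have hd2 : ∀ z ∈ M, ∀ C ∈ 𝒬, C ≠ z.1 → C ≠ z.2 → Disjoint C (z.1 ∪ z.2) := by
      intro z hz C hC h1 h2
      obtain ⟨hz1, hz2, _⟩ := hM z hz
      exact Set.disjoint_union_right.mpr ⟨hdisj C hC z.1 hz1 h1, hdisj C hC z.2 hz2 h2⟩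
    rintro C (⟨hC, hCnot⟩ | ⟨z, hz, rfl⟩) C' (⟨hC', hCnot'⟩ | ⟨z', hz', rfl⟩) hne'
    · exact hdisj C hC C' hC' hne'
    · have h1 : C ≠ z'.1 := fun h => hCnot (Set.mem_union_right _ ⟨z', hz', Or.inl h⟩)
      have h2 : C ≠ z'.2 := fun h => hCnot (Set.mem_union_right _ ⟨z', hz', Or.inr h⟩)
      exact hd2 z' hz' C hC h1 h2
    · have h1 : C' ≠ z.1 := fun h => hCnot' (Set.mem_union_right _ ⟨z, hz, Or.inl h⟩)
      have h2 : C' ≠ z.2 := fun h => hCnot' (Set.mem_union_right _ ⟨z, hz, Or.inr h⟩)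
      exact (hd2 z hz C' hC' h1 h2).symm
    · have hzz : z ≠ z' := by rintro rfl; exact hne' rfl
      obtain ⟨e1, e2, e3, e4⟩ := hMd z hz z' hz' hzz
      obtain ⟨hz1, hz2, _⟩ := hM z hz
      obtain ⟨hz1', hz2', _⟩ := hM z' hz'
      apply Set.disjoint_union_left.mpr
      constructor
      · exact Set.disjoint_union_right.mpr
          ⟨hdisj z.1 hz1 z'.1 hz1' e1, hdisj z.1 hz1 z'.2 hz2' e2⟩
      · exact Set.disjoint_union_right.mpr
          ⟨hdisj z.2 hz2 z'.1 hz1' e3, hdisj z.2 hz2 z'.2 hz2' e4⟩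


/-- The invariant carried along the construction, at "round" `i` (level `2i`). -/
structure DormSt (d n v D₀ : ℕ) (A₀ : Set (Fin d → ZMod n)) (i : ℕ)
    (Ai : Set (Fin d → ZMod n)) (𝒞i : Set (Set (Fin d → ZMod n))) : Prop where
  part : IsPartitionOf 𝒞i Ai
  sub : Ai ⊆ A₀
  size : ∀ C ∈ 𝒞i, 2 ^ i * v ≤ C.ncard
  diam : ∀ C ∈ 𝒞i, 12 * v * torusDiam C ≤ C.ncard * (18 ^ i * D₀)
  mass : (A₀.ncard : ℝ) - 4 * v * (6 * n / (D₀ : ℝ)) ^ d * (1 - (1/18 : ℝ) ^ i)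
      ≤ ((Ai).ncard : ℝ)


set_option maxHeartbeats 1000000 in
/-- Carry out one full round (two hierarchy levels), given matchings for the two
sub-steps and a set of clusters to discard. -/
lemma build2 (d n v D₀ : ℕ) (hd : 1 ≤ d) (hn : 1 ≤ n) (hv : 1 ≤ v) (hD₀ : 1 ≤ D₀)
    (A₀ : Set (Fin d → ZMod n)) (i : ℕ) (Ai : Set (Fin d → ZMod n))
    (𝒞i : Set (Set (Fin d → ZMod n))) (st : DormSt d n v D₀ A₀ i Ai 𝒞i)
    (M₁ : Set (Set (Fin d → ZMod n) × Set (Fin d → ZMod n)))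
    (hM1 : ∀ z ∈ M₁, z.1 ∈ 𝒞i ∧ z.2 ∈ 𝒞i ∧ z.1 ≠ z.2)
    (hM1d : ∀ z ∈ M₁, ∀ z' ∈ M₁, z ≠ z' →
      z.1 ≠ z'.1 ∧ z.1 ≠ z'.2 ∧ z.2 ≠ z'.1 ∧ z.2 ≠ z'.2)
    (hM1cert : ∀ z ∈ M₁, torusDiam (z.1 ∪ z.2) ≤ 36 ^ i * D₀)
    (Dset : Set (Set (Fin d → ZMod n))) (hDsub : Dset ⊆ 𝒞i)
    (hDM : ∀ C ∈ Dset, ∀ z ∈ M₁, C ≠ z.1 ∧ C ≠ z.2)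
    (hDmass : ((⋃₀ Dset).ncard : ℝ) ≤
      4 * v * (6 * n / (D₀ : ℝ)) ^ d * ((1/18 : ℝ) ^ i - (1/18 : ℝ) ^ (i+1)))
    (M₂ : Set (Set (Fin d → ZMod n) × Set (Fin d → ZMod n)))
    (hM2 : ∀ z ∈ M₂,
      z.1 ∈ (𝒞i \ (Dset ∪ {C | ∃ z ∈ M₁, C = z.1 ∨ C = z.2})) ∪
        {U | ∃ z ∈ M₁, U = z.1 ∪ z.2} ∧
      z.2 ∈ (𝒞i \ (Dset ∪ {C | ∃ z ∈ M₁, C = z.1 ∨ C = z.2})) ∪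
        {U | ∃ z ∈ M₁, U = z.1 ∪ z.2} ∧ z.1 ≠ z.2)
    (hM2d : ∀ z ∈ M₂, ∀ z' ∈ M₂, z ≠ z' →
      z.1 ≠ z'.1 ∧ z.1 ≠ z'.2 ∧ z.2 ≠ z'.1 ∧ z.2 ≠ z'.2)
    (hM2cert : ∀ z ∈ M₂, torusDiam (z.1 ∪ z.2) ≤ 36 ^ i * D₀)
    (hresid : ∀ C ∈ 𝒞i, C ∉ Dset → (∀ z ∈ M₁, C ≠ z.1 ∧ C ≠ z.2) →
      (∀ z ∈ M₂, C ≠ z.1 ∧ C ≠ z.2) → 2 ^ (i+1) * v ≤ C.ncard) :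
    ∃ lvl1 lvl2 prt1 prt2,
      lvl1 ⊆ Ai ∧ lvl2 ⊆ lvl1 ∧
      IsPartitionOf prt1 lvl1 ∧
      (∀ C ∈ prt1, 2 ^ i * v ≤ C.ncard) ∧
      (∀ C ∈ prt1, C ∉ 𝒞i →
        torusDiam C ≤ 36 ^ i * D₀ ∧ ∃ C₀ ∈ 𝒞i, ∃ C₁ ∈ 𝒞i, C = C₀ ∪ C₁) ∧
      (∀ C ∈ prt2, C ∉ prt1 →
        torusDiam C ≤ 6 * (36 ^ i * D₀) ∧ ∃ C₀ ∈ prt1, ∃ C₁ ∈ prt1, C = C₀ ∪ C₁) ∧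
      DormSt d n v D₀ A₀ (i + 1) lvl2 prt2 := by
  classical
  haveI : NeZero n := ⟨by omega⟩
  obtain ⟨hCne, hCun, hCdisj⟩ := st.part
  have hCsub : ∀ C ∈ 𝒞i, C ⊆ Ai := fun C hC => hCun ▸ Set.subset_sUnion_of_mem hC
  have hE0 : 0 < 18 ^ i * D₀ :=
    Nat.mul_pos (pow_pos (by norm_num) _) (by omega)
  have h36 : (36 : ℕ) ^ i = 2 ^ i * 18 ^ i := by rw [← Nat.mul_pow]
  have h36' : (36 : ℕ) ^ (i+1) = 2 ^ (i+1) * 18 ^ (i+1) := by rw [← Nat.mul_pow]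
  have hbump : ∀ C : Set (Fin d → ZMod n), torusDiam C ≤ 36 ^ i * D₀ →
      2 ^ (i+1) * v ≤ C.ncard →
      12 * v * torusDiam C ≤ C.ncard * (18 ^ (i+1) * D₀) := by
    intro C h1 h2
    calc 12 * v * torusDiam C ≤ 12 * v * (36 ^ i * D₀) := Nat.mul_le_mul_left _ h1
      _ ≤ (2 ^ (i+1) * v) * (18 ^ (i+1) * D₀) := by
          calc 12 * v * (36 ^ i * D₀) ≤ 36 * v * (36 ^ i * D₀) :=
                Nat.mul_le_mul (Nat.mul_le_mul (by norm_num) (le_refl v)) (le_refl _)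
            _ = (2 ^ (i+1) * v) * (18 ^ (i+1) * D₀) := by
                rw [show (36 : ℕ) * v * (36 ^ i * D₀) = v * (36 ^ (i+1) * D₀) by
                  rw [pow_succ]; ring, h36']
                ring
      _ ≤ C.ncard * (18 ^ (i+1) * D₀) := Nat.mul_le_mul_right _ h2
  have holddiam : ∀ C ∈ 𝒞i, 12 * v * torusDiam C ≤ C.ncard * (18 ^ (i+1) * D₀) := by
    intro C hC
    calc 12 * v * torusDiam C ≤ C.ncard * (18 ^ i * D₀) := st.diam C hC
      _ ≤ C.ncard * (18 ^ (i+1) * D₀) :=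
          Nat.mul_le_mul (le_refl _)
            (Nat.mul_le_mul (Nat.pow_le_pow_right (by omega) (by omega)) (le_refl _))
  -- step 1
  set prt1 : Set (Set (Fin d → ZMod n)) :=
    (𝒞i \ (Dset ∪ {C | ∃ z ∈ M₁, C = z.1 ∨ C = z.2})) ∪
      {U | ∃ z ∈ M₁, U = z.1 ∪ z.2} with hprt1def
  set lvl1 : Set (Fin d → ZMod n) := Ai \ ⋃₀ Dset with hlvl1def
  have hpart1 : IsPartitionOf prt1 lvl1 :=
    step_lemma 𝒞i Ai ⟨hCne, hCun, hCdisj⟩ M₁ hM1 hM1d Dset hDsub hDM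
  have hpaircard1 : ∀ z ∈ M₁, (z.1 ∪ z.2).ncard = z.1.ncard + z.2.ncard := by
    intro z hz
    obtain ⟨h1, h2, h3⟩ := hM1 z hz
    exact Set.ncard_union_eq (hCdisj _ h1 _ h2 h3) (Set.toFinite _) (Set.toFinite _)
  have hsize1 : ∀ C ∈ prt1, 2 ^ i * v ≤ C.ncard := by
    rintro C (⟨hC, -⟩ | ⟨z, hz, rfl⟩)
    · exact st.size C hC
    · obtain ⟨h1, h2, h3⟩ := hM1 z hz
      rw [hpaircard1 z hz]
      have := st.size z.1 h1
      omega
  have hsize1' : ∀ z ∈ M₁, 2 ^ (i+1) * v ≤ (z.1 ∪ z.2).ncard := by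
    intro z hz
    obtain ⟨h1, h2, h3⟩ := hM1 z hz
    rw [hpaircard1 z hz]
    have ha := st.size z.1 h1
    have hb := st.size z.2 h2
    have : 2 ^ (i+1) * v = 2 ^ i * v + 2 ^ i * v := by rw [pow_succ]; ring
    omega
  have hcert1 : ∀ C ∈ prt1, C ∉ 𝒞i →
      torusDiam C ≤ 36 ^ i * D₀ ∧ ∃ C₀ ∈ 𝒞i, ∃ C₁ ∈ 𝒞i, C = C₀ ∪ C₁ := by
    rintro C (⟨hC, -⟩ | ⟨z, hz, rfl⟩) hnot
    · exact absurd hC hnot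
    · obtain ⟨h1, h2, h3⟩ := hM1 z hz
      exact ⟨hM1cert z hz, z.1, h1, z.2, h2, rfl⟩
  -- step 2
  set prt2 : Set (Set (Fin d → ZMod n)) :=
    (prt1 \ ((∅ : Set (Set (Fin d → ZMod n))) ∪ {C | ∃ z ∈ M₂, C = z.1 ∨ C = z.2})) ∪
      {U | ∃ z ∈ M₂, U = z.1 ∪ z.2} with hprt2def
  set lvl2 : Set (Fin d → ZMod n) := lvl1 \ ⋃₀ (∅ : Set (Set (Fin d → ZMod n)))
    with hlvl2def
  have hpart2 : IsPartitionOf prt2 lvl2 :=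
    step_lemma prt1 lvl1 hpart1 M₂ hM2 hM2d ∅ (Set.empty_subset _) (by simp)
  have hlvl2eq : lvl2 = lvl1 := by rw [hlvl2def]; simp
  have hdisj1 : ∀ C ∈ prt1, ∀ C' ∈ prt1, C ≠ C' → Disjoint C C' := hpart1.2.2
  have hpaircard2 : ∀ z ∈ M₂, (z.1 ∪ z.2).ncard = z.1.ncard + z.2.ncard := by
    intro z hz
    obtain ⟨h1, h2, h3⟩ := hM2 z hz
    exact Set.ncard_union_eq (hdisj1 _ h1 _ h2 h3) (Set.toFinite _) (Set.toFinite _)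
  have hsize2' : ∀ z ∈ M₂, 2 ^ (i+1) * v ≤ (z.1 ∪ z.2).ncard := by
    intro z hz
    obtain ⟨h1, h2, h3⟩ := hM2 z hz
    rw [hpaircard2 z hz]
    have ha := hsize1 z.1 h1
    have hb := hsize1 z.2 h2
    have : 2 ^ (i+1) * v = 2 ^ i * v + 2 ^ i * v := by rw [pow_succ]; ring
    omega
  have hcert2 : ∀ C ∈ prt2, C ∉ prt1 →
      torusDiam C ≤ 6 * (36 ^ i * D₀) ∧ ∃ C₀ ∈ prt1, ∃ C₁ ∈ prt1, C = C₀ ∪ C₁ := by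
    rintro C (⟨hC, -⟩ | ⟨z, hz, rfl⟩) hnot
    · exact absurd hC hnot
    · obtain ⟨h1, h2, h3⟩ := hM2 z hz
      refine ⟨le_trans (hM2cert z hz) (by omega), z.1, h1, z.2, h2, rfl⟩
  -- the new state
  have hsize2 : ∀ C ∈ prt2, 2 ^ (i+1) * v ≤ C.ncard := by
    rintro C (⟨hC, hCnot⟩ | ⟨z, hz, rfl⟩)
    · have hun2 : ∀ z ∈ M₂, C ≠ z.1 ∧ C ≠ z.2 := by
        intro z hz
        constructor <;> intro h <;>
          exact hCnot (Set.mem_union_right _ ⟨z, hz, by tauto⟩)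
      rcases hC with ⟨hC𝒞, hCnot1⟩ | ⟨z, hz, rfl⟩
      · refine hresid C hC𝒞 ?_ ?_ hun2
        · intro h; exact hCnot1 (Set.mem_union_left _ h)
        · intro z hz
          constructor <;> intro h <;>
            exact hCnot1 (Set.mem_union_right _ ⟨z, hz, by tauto⟩)
      · exact hsize1' z hz
    · exact hsize2' z hz
  have hdiam2 : ∀ C ∈ prt2, 12 * v * torusDiam C ≤ C.ncard * (18 ^ (i+1) * D₀) := by
    rintro C (⟨hC, hCnot⟩ | ⟨z, hz, rfl⟩)
    · rcases hC with ⟨hC𝒞, hCnot1⟩ | ⟨z, hz, rfl⟩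
      · exact holddiam C hC𝒞
      · exact hbump _ (hM1cert z hz) (hsize1' z hz)
    · exact hbump _ (hM2cert z hz) (hsize2' z hz)
  have hUsub : ⋃₀ Dset ⊆ Ai := by
    intro x ⟨C, hC, hxC⟩
    exact hCsub C (hDsub hC) hxC
  have hmass2 : (A₀.ncard : ℝ) -
      4 * v * (6 * n / (D₀ : ℝ)) ^ d * (1 - (1/18 : ℝ) ^ (i+1)) ≤ ((lvl2).ncard : ℝ) := by
    have hcardeq : (lvl1).ncard = Ai.ncard - (⋃₀ Dset).ncard := by
      rw [hlvl1def]
      exact Set.ncard_diff hUsub (Set.toFinite _)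
    have hle : (⋃₀ Dset).ncard ≤ Ai.ncard := Set.ncard_le_ncard hUsub (Set.toFinite _)
    have hcast : ((lvl1).ncard : ℝ) = (Ai.ncard : ℝ) - ((⋃₀ Dset).ncard : ℝ) := by
      rw [hcardeq, Nat.cast_sub hle]
    have hmass := st.mass
    rw [hlvl2eq, hcast]
    linarith
  exact ⟨lvl1, lvl2, prt1, prt2,
    Set.diff_subset, by rw [hlvl2eq], hpart1, hsize1, hcert1, hcert2,
    { part := hpart2
      sub := fun x hx => st.sub (Set.diff_subset (hlvl2eq ▸ hx))
      size := hsize2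
      diam := hdiam2
      mass := hmass2 }⟩

set_option maxHeartbeats 1000000 in
lemma round_lemma (d n v D₀ : ℕ) (hd : 1 ≤ d) (hn : 1 ≤ n) (hv : 1 ≤ v) (hD₀ : 1 ≤ D₀)
    (A₀ : Set (Fin d → ZMod n)) (i : ℕ) (Ai : Set (Fin d → ZMod n))
    (𝒞i : Set (Set (Fin d → ZMod n))) (st : DormSt d n v D₀ A₀ i Ai 𝒞i)
    (hm : ∃ C ∈ 𝒞i, ∃ C' ∈ 𝒞i, C ≠ C') :
    ∃ lvl1 lvl2 prt1 prt2,
      lvl1 ⊆ Ai ∧ lvl2 ⊆ lvl1 ∧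
      IsPartitionOf prt1 lvl1 ∧
      (∀ C ∈ prt1, 2 ^ i * v ≤ C.ncard) ∧
      (∀ C ∈ prt1, C ∉ 𝒞i →
        torusDiam C ≤ 36 ^ i * D₀ ∧ ∃ C₀ ∈ 𝒞i, ∃ C₁ ∈ 𝒞i, C = C₀ ∪ C₁) ∧
      (∀ C ∈ prt2, C ∉ prt1 →
        torusDiam C ≤ 6 * (36 ^ i * D₀) ∧ ∃ C₀ ∈ prt1, ∃ C₁ ∈ prt1, C = C₀ ∪ C₁) ∧
      DormSt d n v D₀ A₀ (i + 1) lvl2 prt2 := by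
  classical
  haveI : NeZero n := ⟨by omega⟩
  obtain ⟨hCne, hCun, hCdisj⟩ := st.part
  set X := 36 ^ i * D₀ with hXdef
  have hE0 : 0 < 18 ^ i * D₀ :=
    Nat.mul_pos (pow_pos (by norm_num) _) (by omega)
  have hX1 : 1 ≤ X := by
    rw [hXdef]
    calc 1 = 1 * 1 := rfl
      _ ≤ 36 ^ i * D₀ := Nat.mul_le_mul (Nat.one_le_pow _ _ (by norm_num)) hD₀
  have h36 : (36 : ℕ) ^ i = 2 ^ i * 18 ^ i := by rw [← Nat.mul_pow]
  have h36' : (36 : ℕ) ^ (i+1) = 2 ^ (i+1) * 18 ^ (i+1) := by rw [← Nat.mul_pow]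
  have hCsub : ∀ C ∈ 𝒞i, C ⊆ Ai := fun C hC => hCun ▸ Set.subset_sUnion_of_mem hC
  -- the small clusters
  set Sm : Set (Set (Fin d → ZMod n)) := {C | C ∈ 𝒞i ∧ C.ncard < 2 ^ (i+1) * v} with hSmdef
  have hSmsub : Sm ⊆ 𝒞i := fun C hC => hC.1
  -- the diameter bound for small clusters
  have hsmalldiam : ∀ C ∈ Sm, 6 * torusDiam C < X := by
    intro C hC
    have h1 := st.diam C hC.1
    have h2 : C.ncard * (18 ^ i * D₀) < 2 ^ (i+1) * v * (18 ^ i * D₀) :=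
      Nat.mul_lt_mul_of_lt_of_le hC.2 (le_refl _) hE0
    have h3 : 2 ^ (i+1) * v * (18 ^ i * D₀) = (2 * v) * X := by
      rw [hXdef, h36, pow_succ]; ring
    have h5 : (2 * v) * (6 * torusDiam C) < (2 * v) * X := by
      calc (2 * v) * (6 * torusDiam C) = 12 * v * torusDiam C := by ring
        _ < (2 * v) * X := by omega
    exact Nat.lt_of_mul_lt_mul_left h5
  -- uniform bound giving the next diameter invariant
  have hbump : ∀ C : Set (Fin d → ZMod n), torusDiam C ≤ X → 2 ^ (i+1) * v ≤ C.ncard →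
      12 * v * torusDiam C ≤ C.ncard * (18 ^ (i+1) * D₀) := by
    intro C h1 h2
    calc 12 * v * torusDiam C ≤ 12 * v * X := Nat.mul_le_mul_left _ h1
      _ ≤ (2 ^ (i+1) * v) * (18 ^ (i+1) * D₀) := by
          rw [hXdef]
          calc 12 * v * (36 ^ i * D₀) ≤ 36 * v * (36 ^ i * D₀) :=
                Nat.mul_le_mul (Nat.mul_le_mul (by norm_num) (le_refl v)) (le_refl _)
            _ = (2 ^ (i+1) * v) * (18 ^ (i+1) * D₀) := by
                rw [show (36 : ℕ) * v * (36 ^ i * D₀) = v * (36 ^ (i+1) * D₀) by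
                  rw [pow_succ]; ring, h36']
                ring
      _ ≤ C.ncard * (18 ^ (i+1) * D₀) := Nat.mul_le_mul_right _ h2
  have holddiam : ∀ C ∈ 𝒞i, 12 * v * torusDiam C ≤ C.ncard * (18 ^ (i+1) * D₀) := by
    intro C hC
    calc 12 * v * torusDiam C ≤ C.ncard * (18 ^ i * D₀) := st.diam C hC
      _ ≤ C.ncard * (18 ^ (i+1) * D₀) :=
          Nat.mul_le_mul (le_refl _)
            (Nat.mul_le_mul (Nat.pow_le_pow_right (by omega) (by omega)) (le_refl _))
  by_cases hfree : n ≤ X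
  · -- FREE case : any two clusters can be merged
    have hdiamX : ∀ C : Set (Fin d → ZMod n), torusDiam C ≤ X := by
      intro C
      have := torusDiam_le_n_sub_one hn C
      omega
    obtain ⟨M, hMmem, hMdist, hMmax⟩ :=
      exists_matching (β := Set (Fin d → ZMod n)) (fun C C' => C ≠ C')
        (fun a b h => h.symm) (fun a h => h rfl) Sm
    have hM1 : ∀ z ∈ M, z.1 ∈ 𝒞i ∧ z.2 ∈ 𝒞i ∧ z.1 ≠ z.2 := by
      intro z hz
      obtain ⟨h1, h2, h3⟩ := hMmem z hz
      exact ⟨hSmsub h1, hSmsub h2, h3⟩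
    have hM1cert : ∀ z ∈ M, torusDiam (z.1 ∪ z.2) ≤ 36 ^ i * D₀ := fun z _ => hdiamX _
    have hDmass0 : ((⋃₀ (∅ : Set (Set (Fin d → ZMod n)))).ncard : ℝ) ≤
        4 * v * (6 * n / (D₀ : ℝ)) ^ d * ((1/18 : ℝ) ^ i - (1/18 : ℝ) ^ (i+1)) := by
      simp only [Set.sUnion_empty, Set.ncard_empty, Nat.cast_zero]
      have h1 : (0:ℝ) ≤ (6 * n / (D₀ : ℝ)) ^ d := by positivity
      have h2 : ((1:ℝ)/18) ^ (i+1) ≤ ((1:ℝ)/18) ^ i := by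
        apply pow_le_pow_of_le_one <;> norm_num
      have h3 : (0:ℝ) ≤ 4 * v := by positivity
      have h4 : (0:ℝ) ≤ (1/18:ℝ)^i - (1/18:ℝ)^(i+1) := by linarith
      exact mul_nonneg (mul_nonneg h3 h1) h4
    by_cases hu : ∃ u ∈ Sm, ∀ z ∈ M, u ≠ z.1 ∧ u ≠ z.2
    · -- one leftover small cluster: absorb it in the second sub-step
      obtain ⟨u, hu1, hu2⟩ := hu
      have huniq : ∀ w ∈ Sm, (∀ z ∈ M, w ≠ z.1 ∧ w ≠ z.2) → w = u := by
        intro w hw hwun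
        by_contra hne
        exact (hMmax w hw u hu1 hwun hu2 hne) hne
      -- u belongs to prt1
      set prt1e : Set (Set (Fin d → ZMod n)) :=
        (𝒞i \ ((∅ : Set (Set (Fin d → ZMod n))) ∪ {C | ∃ z ∈ M, C = z.1 ∨ C = z.2})) ∪
          {U | ∃ z ∈ M, U = z.1 ∪ z.2} with hprt1edef
      have hpart1 : IsPartitionOf prt1e (Ai \ ⋃₀ (∅ : Set (Set (Fin d → ZMod n)))) :=
        step_lemma 𝒞i Ai ⟨hCne, hCun, hCdisj⟩ M hM1 hMdist ∅ (Set.empty_subset _)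
          (by simp)
      have humem : u ∈ prt1e := by
        apply Set.mem_union_left
        refine ⟨hu1.1, ?_⟩
        rintro (h | ⟨z, hz, h⟩)
        · exact h
        · rcases h with h | h
          · exact (hu2 z hz).1 h
          · exact (hu2 z hz).2 h
      -- a partner for u
      have hpartner : ∃ P ∈ prt1e, P ≠ u := by
        by_contra hno
        push_neg at hno
        obtain ⟨Ca, hCa, Cb, hCb, hab⟩ := hm
        have hcover : ∀ x ∈ Ai, x ∈ u := by
          intro x hx
          have hx1 : x ∈ ⋃₀ prt1e := by
            rw [hpart1.2.1]; simp only [Set.sUnion_empty, Set.diff_empty]; exact hx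
          obtain ⟨P, hP, hxP⟩ := hx1
          rwa [hno P hP] at hxP
        have key : ∀ C ∈ 𝒞i, C ≠ u → False := by
          intro C hC hCne'
          obtain ⟨x, hx⟩ := hCne C hC
          have hxu : x ∈ u := hcover x (hCsub C hC hx)
          exact Set.disjoint_left.mp (hCdisj C hC u hu1.1 hCne') hx hxu
        by_cases hca : Ca = u
        · exact key Cb hCb (by rw [← hca]; exact hab.symm)
        · exact key Ca hCa hca
      obtain ⟨P, hPmem, hPne⟩ := hpartner
      refine build2 d n v D₀ hd hn hv hD₀ A₀ i Ai 𝒞i st M hM1 hMdist hM1cert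
        ∅ (Set.empty_subset _) (by simp) hDmass0 {(u, P)} ?_ ?_ ?_ ?_
      · rintro z rfl
        exact ⟨humem, hPmem, hPne.symm⟩
      · rintro z rfl z' rfl hne'
        exact absurd rfl hne'
      · rintro z rfl
        exact hdiamX _
      · intro C hC hCD hCun1 hCun2
        by_contra hsz
        push_neg at hsz
        have hCSm : C ∈ Sm := ⟨hC, hsz⟩
        have : C = u := huniq C hCSm hCun1
        exact (hCun2 (u, P) rfl).1 this
    · -- no leftover : all small clusters matched
      refine build2 d n v D₀ hd hn hv hD₀ A₀ i Ai 𝒞i st M hM1 hMdist hM1cert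
        ∅ (Set.empty_subset _) (by simp) hDmass0 ∅ (by simp) (by simp) (by simp) ?_
      · intro C hC hCD hCun1 hCun2
        by_contra hsz
        push_neg at hsz
        exact hu ⟨C, ⟨hC, hsz⟩, hCun1⟩
  · -- NON-FREE case : X < n
    push_neg at hfree
    set ρ := X / 5 with hρdef
    set adj : Set (Fin d → ZMod n) → Set (Fin d → ZMod n) → Prop :=
      fun C C' => C ≠ C' ∧ ∃ p ∈ C, ∃ q ∈ C', torusDist p q ≤ ρ with hadjdef
    have hadjsymm : ∀ a b, adj a b → adj b a := by
      rintro a b ⟨hne, p, hp, q, hq, hle⟩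
      exact ⟨hne.symm, q, hq, p, hp, by rwa [torusDist_symm' hn]⟩
    have hadjirr : ∀ a, ¬ adj a a := fun a h => h.1 rfl
    obtain ⟨M, hMmem, hMdist, hMmax⟩ := exists_matching adj hadjsymm hadjirr Sm
    have hM1 : ∀ z ∈ M, z.1 ∈ 𝒞i ∧ z.2 ∈ 𝒞i ∧ z.1 ≠ z.2 := by
      intro z hz
      obtain ⟨h1, h2, h3⟩ := hMmem z hz
      exact ⟨hSmsub h1, hSmsub h2, h3.1⟩
    have hρle : 5 * ρ ≤ X := by omega
    have hM1cert : ∀ z ∈ M, torusDiam (z.1 ∪ z.2) ≤ 36 ^ i * D₀ := by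
      intro z hz
      obtain ⟨h1, h2, hne, p, hp, q, hq, hpq⟩ := hMmem z hz
      have hd1 := hsmalldiam z.1 h1
      have hd2 := hsmalldiam z.2 h2
      have := torusDiam_union hn hp hq
      have : torusDiam (z.1 ∪ z.2) ≤ torusDiam z.1 + torusDist p q + torusDiam z.2 :=
        this
      omega
    set Dset : Set (Set (Fin d → ZMod n)) :=
      {C | C ∈ Sm ∧ ∀ z ∈ M, C ≠ z.1 ∧ C ≠ z.2} with hDsetdef
    have hDsub : Dset ⊆ 𝒞i := fun C hC => hSmsub hC.1
    have hDM : ∀ C ∈ Dset, ∀ z ∈ M, C ≠ z.1 ∧ C ≠ z.2 := fun C hC => hC.2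
    -- counting the discarded clusters
    have hDmass : ((⋃₀ Dset).ncard : ℝ) ≤
        4 * v * (6 * n / (D₀ : ℝ)) ^ d * ((1/18 : ℝ) ^ i - (1/18 : ℝ) ^ (i+1)) := by
      classical
      set rep : Set (Fin d → ZMod n) → (Fin d → ZMod n) :=
        fun C => if h : C.Nonempty then h.choose else (fun _ => 0) with hrepdef
      have hrep : ∀ C ∈ 𝒞i, rep C ∈ C := by
        intro C hC
        have hCn := hCne C hC
        rw [hrepdef]
        simp only [dif_pos hCn]
        exact hCn.choose_spec
      have hinj : Set.InjOn rep Dset := by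
        intro C hC C' hC' heq
        by_contra hne
        have h1 := hrep C (hDsub hC)
        have h2 := hrep C' (hDsub hC')
        rw [heq] at h1
        exact Set.disjoint_left.mp (hCdisj C (hDsub hC) C' (hDsub hC') hne) h1 h2
      have hsep : ∀ x ∈ rep '' Dset, ∀ y ∈ rep '' Dset, x ≠ y → ρ < torusDist x y := by
        rintro x ⟨C, hC, rfl⟩ y ⟨C', hC', rfl⟩ hxy
        have hne : C ≠ C' := by rintro rfl; exact hxy rfl
        have hnadj : ¬ adj C C' := hMmax C hC.1 C' hC'.1 hC.2 hC'.2 hne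
        simp only [hadjdef] at hnadj
        push_neg at hnadj
        have := hnadj hne (rep C) (hrep C (hDsub hC)) (rep C') (hrep C' (hDsub hC'))
        omega
      have hcnt : (rep '' Dset).ncard ≤ ((n + ρ) / (ρ + 1)) ^ d :=
        separated_ncard_le hn ρ (rep '' Dset) hsep
      have hDcard : Dset.ncard ≤ ((n + ρ) / (ρ + 1)) ^ d := by
        rwa [Set.ncard_image_of_injOn hinj] at hcnt
      have hUcard : (⋃₀ Dset).ncard ≤ Dset.ncard * (2 ^ (i+1) * v) :=
        ncard_sUnion_le _ _ (fun C hC => le_of_lt hC.1.2)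
      -- real-number estimates
      have hXpos : (0:ℝ) < (X : ℝ) := by exact_mod_cast hX1
      have hD₀pos : (0:ℝ) < (D₀ : ℝ) := by exact_mod_cast hD₀
      have hq1 : (((n + ρ) / (ρ + 1) : ℕ) : ℝ) ≤ 6 * n / (X : ℝ) := by
        have h1 : (((n + ρ) / (ρ + 1) : ℕ) : ℝ) ≤ ((n + ρ : ℕ) : ℝ) / ((ρ + 1 : ℕ) : ℝ) :=
          Nat.cast_div_le
        have hρpos : (0:ℝ) < ((ρ:ℕ):ℝ) + 1 := by positivity
        have h2 : ((n + ρ : ℕ) : ℝ) / ((ρ + 1 : ℕ) : ℝ) =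
            (n:ℝ)/((ρ:ℝ)+1) + (ρ:ℝ)/((ρ:ℝ)+1) := by push_cast; rw [add_div]
        have h3 : (ρ:ℝ)/((ρ:ℝ)+1) ≤ 1 := by
          rw [div_le_one hρpos]; linarith
        have h45 : (X:ℝ) ≤ 5 * ((ρ:ℝ) + 1) := by
          have : X < 5 * ρ + 5 := by omega
          have := (Nat.cast_lt (α := ℝ)).mpr this
          push_cast at this ⊢
          linarith
        have h4 : (n:ℝ)/((ρ:ℝ)+1) ≤ 5 * n / (X:ℝ) := by
          rw [div_le_div_iff₀ hρpos hXpos]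
          have hn0 : (0:ℝ) ≤ (n:ℝ) := by positivity
          nlinarith
        have h5 : (1:ℝ) ≤ (n:ℝ) / (X:ℝ) := by
          rw [le_div_iff₀ hXpos]
          have : (X:ℝ) ≤ (n:ℝ) := by exact_mod_cast le_of_lt hfree
          linarith
        calc (((n + ρ) / (ρ + 1) : ℕ) : ℝ) ≤ (n:ℝ)/((ρ:ℝ)+1) + (ρ:ℝ)/((ρ:ℝ)+1) := by
              rw [← h2]; exact h1
          _ ≤ 5 * n / (X:ℝ) + 1 := add_le_add h4 h3
          _ ≤ 5 * n / (X:ℝ) + (n:ℝ)/(X:ℝ) := by linarith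
          _ = 6 * n / (X:ℝ) := by ring
      have hXR : ((X:ℕ):ℝ) = (36:ℝ)^i * (D₀:ℝ) := by rw [hXdef]; push_cast; ring
      have hq2 : (6:ℝ) * n / (X : ℝ) = (6 * n / (D₀ : ℝ)) / (36:ℝ)^i := by
        rw [hXR, div_div]
        ring_nf
      set B : ℝ := 6 * n / (D₀ : ℝ) with hBdef
      have hBnn : (0:ℝ) ≤ B := by positivity
      have hqd : ((((n + ρ) / (ρ + 1) : ℕ) : ℝ)) ^ d ≤ (B / (36:ℝ)^i) ^ d := by
        apply pow_le_pow_left₀ (by positivity)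
        rw [← hq2]; exact hq1
      have h36d : (36:ℝ)^i ≤ ((36:ℝ)^i)^d := by
        have h1 : (1:ℝ) ≤ (36:ℝ)^i := one_le_pow₀ (by norm_num)
        calc (36:ℝ)^i = ((36:ℝ)^i)^1 := (pow_one _).symm
          _ ≤ ((36:ℝ)^i)^d := pow_le_pow_right₀ h1 hd
      have hBd : (B / (36:ℝ)^i) ^ d ≤ B ^ d / (36:ℝ)^i := by
        rw [div_pow]
        apply div_le_div_of_nonneg_left (by positivity) (by positivity) h36d
      -- put everything together
      have hUreal : ((⋃₀ Dset).ncard : ℝ) ≤ (B ^ d / (36:ℝ)^i) * (2 ^ (i+1) * v) := by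
        calc ((⋃₀ Dset).ncard : ℝ) ≤ (Dset.ncard : ℝ) * ((2:ℝ) ^ (i+1) * v) := by
              exact_mod_cast hUcard
          _ ≤ ((((n + ρ) / (ρ + 1) : ℕ) : ℝ)) ^ d * ((2:ℝ) ^ (i+1) * v) := by
              apply mul_le_mul_of_nonneg_right _ (by positivity)
              exact_mod_cast hDcard
          _ ≤ (B ^ d / (36:ℝ)^i) * (2 ^ (i+1) * v) := by
              apply mul_le_mul_of_nonneg_right (le_trans hqd hBd) (by positivity)
      have hfin : (B ^ d / (36:ℝ)^i) * (2 ^ (i+1) * v) ≤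
          4 * v * B ^ d * ((1/18 : ℝ) ^ i - (1/18 : ℝ) ^ (i+1)) := by
        have h218 : ((2:ℝ)^i) / ((36:ℝ)^i) = ((1:ℝ)/18)^i := by
          rw [← div_pow]; norm_num
        have hBdnn : (0:ℝ) ≤ B^d := by positivity
        have h36pos : (0:ℝ) < (36:ℝ)^i := by positivity
        have hvpos : (0:ℝ) < (v:ℝ) := by exact_mod_cast hv
        have lhs_eq : (B ^ d / (36:ℝ)^i) * (2 ^ (i+1) * v) =
            2 * v * B^d * ((1/18:ℝ)^i) := by
          rw [← h218]
          field_simp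
          ring
        have rhs_eq : 4 * v * B ^ d * ((1/18 : ℝ) ^ i - (1/18 : ℝ) ^ (i+1)) =
            (34/9) * v * B^d * ((1/18:ℝ)^i) := by
          rw [pow_succ]
          ring
        rw [lhs_eq, rhs_eq]
        have h18nn : (0:ℝ) ≤ ((1/18:ℝ))^i := by positivity
        nlinarith
      linarith
    refine build2 d n v D₀ hd hn hv hD₀ A₀ i Ai 𝒞i st M hM1 hMdist hM1cert
      Dset hDsub hDM hDmass ∅ (by simp) (by simp) (by simp) ?_
    · intro C hC hCD hCun1 hCun2
      by_contra hsz
      push_neg at hsz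
      exact hCD ⟨⟨hC, hsz⟩, hCun1⟩

set_option maxHeartbeats 1000000 in
lemma tail_lemma (d n v D₀ : ℕ) (hd : 1 ≤ d) (hn : 1 ≤ n) (hv : 1 ≤ v) (hD₀ : 1 ≤ D₀)
    (A₀ : Set (Fin d → ZMod n))
    (hcard : 8 * (v : ℝ) * (6 * (n : ℝ) / (D₀ : ℝ)) ^ d ≤ (A₀.ncard : ℝ)) :
    ∀ k i (Ai : Set (Fin d → ZMod n)) (𝒞i : Set (Set (Fin d → ZMod n))),
      DormSt d n v D₀ A₀ i Ai 𝒞i → A₀.ncard ≤ 2 ^ (i + k) * v →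
      ∃ (J : ℕ) (lvl : ℕ → Set (Fin d → ZMod n)) (prt : ℕ → Set (Set (Fin d → ZMod n))),
        lvl 0 = Ai ∧ prt 0 = 𝒞i ∧
        (∀ j, j + 1 ≤ J → lvl (j + 1) ⊆ lvl j) ∧
        (∀ j ≤ J, IsPartitionOf (prt j) (lvl j)) ∧
        (∀ j ≤ J, ∀ C ∈ prt j, 2 ^ ((2 * i + j) / 2) * v ≤ C.ncard) ∧
        (∀ j, j + 1 ≤ J → ∀ C ∈ prt (j + 1), C ∉ prt j →
          torusDiam C ≤ 6 ^ (2 * i + j) * D₀ ∧ ∃ C₀ ∈ prt j, ∃ C₁ ∈ prt j, C = C₀ ∪ C₁) ∧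
        (∃ C, prt J = {C}) ∧
        ((A₀.ncard : ℝ) - 4 * v * (6 * n / (D₀ : ℝ)) ^ d ≤ ((lvl J).ncard : ℝ)) := by
  haveI : NeZero n := ⟨by omega⟩
  have hBpos : (0:ℝ) < 4 * v * (6 * n / (D₀ : ℝ)) ^ d := by
    have h1 : (0:ℝ) < (v:ℝ) := by exact_mod_cast hv
    have h2 : (0:ℝ) < 6 * (n:ℝ) / (D₀:ℝ) := by
      apply div_pos
      · have : (0:ℝ) < (n:ℝ) := by exact_mod_cast hn
        linarith
      · exact_mod_cast hD₀
    positivity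
  -- positivity of the level sets along the construction
  have hAipos : ∀ i (Ai : Set (Fin d → ZMod n)) 𝒞i, DormSt d n v D₀ A₀ i Ai 𝒞i →
      0 < Ai.ncard := by
    intro i Ai 𝒞i st
    have ht0 : (0:ℝ) ≤ (1/18:ℝ)^i := by positivity
    have hm := st.mass
    have hq : (0:ℝ) < (Ai.ncard : ℝ) := by
      nlinarith [mul_nonneg (le_of_lt hBpos) ht0]
    exact_mod_cast hq
  -- the terminal (single-cluster) case
  have hstop : ∀ i (Ai : Set (Fin d → ZMod n)) 𝒞i, DormSt d n v D₀ A₀ i Ai 𝒞i →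
      (∃ C, C ∈ 𝒞i ∧ ∀ C' ∈ 𝒞i, C' = C) →
      ∃ (J : ℕ) (lvl : ℕ → Set (Fin d → ZMod n)) (prt : ℕ → Set (Set (Fin d → ZMod n))),
        lvl 0 = Ai ∧ prt 0 = 𝒞i ∧
        (∀ j, j + 1 ≤ J → lvl (j + 1) ⊆ lvl j) ∧
        (∀ j ≤ J, IsPartitionOf (prt j) (lvl j)) ∧
        (∀ j ≤ J, ∀ C ∈ prt j, 2 ^ ((2 * i + j) / 2) * v ≤ C.ncard) ∧
        (∀ j, j + 1 ≤ J → ∀ C ∈ prt (j + 1), C ∉ prt j →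
          torusDiam C ≤ 6 ^ (2 * i + j) * D₀ ∧ ∃ C₀ ∈ prt j, ∃ C₁ ∈ prt j, C = C₀ ∪ C₁) ∧
        (∃ C, prt J = {C}) ∧
        ((A₀.ncard : ℝ) - 4 * v * (6 * n / (D₀ : ℝ)) ^ d ≤ ((lvl J).ncard : ℝ)) := by
    rintro i Ai 𝒞i st ⟨C, hC, huniq⟩
    refine ⟨0, fun _ => Ai, fun _ => 𝒞i, rfl, rfl, ?_, ?_, ?_, ?_, ⟨C, ?_⟩, ?_⟩
    · intro j hj; exact absurd hj (by omega)
    · intro j _; exact st.part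
    · intro j hj C' hC'
      have hj0 : j = 0 := by omega
      subst hj0
      have he : (2 * i + 0) / 2 = i := by omega
      rw [he]
      exact st.size C' hC'
    · intro j hj; exact absurd hj (by omega)
    · exact Set.eq_singleton_iff_unique_mem.mpr ⟨hC, fun x hx => huniq x hx⟩
    · have ht0 : (0:ℝ) ≤ (1/18:ℝ)^i := by positivity
      have hm := st.mass
      nlinarith [mul_nonneg (le_of_lt hBpos) ht0]
  -- extracting two distinct clusters in the non-terminal case
  have hnonsing : ∀ i (Ai : Set (Fin d → ZMod n)) 𝒞i, DormSt d n v D₀ A₀ i Ai 𝒞i →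
      ¬(∃ C, C ∈ 𝒞i ∧ ∀ C' ∈ 𝒞i, C' = C) → ∃ C ∈ 𝒞i, ∃ C' ∈ 𝒞i, C ≠ C' := by
    intro i Ai 𝒞i st hns
    have hpos := hAipos i Ai 𝒞i st
    have hne : Ai.Nonempty := Set.nonempty_of_ncard_ne_zero (by omega)
    obtain ⟨x, hx⟩ := hne
    rw [← st.part.2.1] at hx
    obtain ⟨C, hC, -⟩ := hx
    push_neg at hns
    obtain ⟨C', hC', hne'⟩ := hns C hC
    exact ⟨C, hC, C', hC', fun h => hne' h.symm⟩
  intro k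
  induction k with
  | zero =>
    intro i Ai 𝒞i st hk
    by_cases hsing : ∃ C, C ∈ 𝒞i ∧ ∀ C' ∈ 𝒞i, C' = C
    · exact hstop i Ai 𝒞i st hsing
    · exfalso
      obtain ⟨C, hC, C', hC', hne⟩ := hnonsing i Ai 𝒞i st hsing
      have h1 := st.size C hC
      have h2 := st.size C' hC'
      have hCsub : C ⊆ Ai := st.part.2.1 ▸ Set.subset_sUnion_of_mem hC
      have hCsub' : C' ⊆ Ai := st.part.2.1 ▸ Set.subset_sUnion_of_mem hC'
      have hsum : (C ∪ C').ncard = C.ncard + C'.ncard :=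
        Set.ncard_union_eq (st.part.2.2 C hC C' hC' hne) (Set.toFinite _) (Set.toFinite _)
      have hle : (C ∪ C').ncard ≤ A₀.ncard :=
        Set.ncard_le_ncard (Set.union_subset (fun x hx => st.sub (hCsub hx))
          (fun x hx => st.sub (hCsub' hx))) (Set.toFinite _)
      rw [Nat.add_zero] at hk
      have hm : 1 ≤ 2 ^ i * v :=
        Nat.mul_le_mul (Nat.one_le_pow _ _ (by norm_num)) hv |>.trans_eq' (by norm_num)
      omega
  | succ k ih =>
    intro i Ai 𝒞i st hk
    by_cases hsing : ∃ C, C ∈ 𝒞i ∧ ∀ C' ∈ 𝒞i, C' = C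
    · exact hstop i Ai 𝒞i st hsing
    · obtain ⟨lvl1, lvl2, prt1, prt2, hsub1, hsub2, hpart1, hsize1, hcert1, hcert2, st'⟩ :=
        round_lemma d n v D₀ hd hn hv hD₀ A₀ i Ai 𝒞i st (hnonsing i Ai 𝒞i st hsing)
      have hk' : A₀.ncard ≤ 2 ^ ((i + 1) + k) * v := by
        have he : i + (k + 1) = (i + 1) + k := by omega
        rw [he] at hk
        exact hk
      obtain ⟨J', lvl', prt', h0, h0p, hanti', hparts', hsizes', hmerge', hfin', hmass'⟩ :=
        ih (i + 1) lvl2 prt2 st' hk'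
      refine ⟨J' + 2,
        fun j => match j with | 0 => Ai | 1 => lvl1 | (j+2) => lvl' j,
        fun j => match j with | 0 => 𝒞i | 1 => prt1 | (j+2) => prt' j,
        rfl, rfl, ?_, ?_, ?_, ?_, ?_, ?_⟩
      · intro j hj
        match j with
        | 0 => exact hsub1
        | 1 =>
          show lvl' 0 ⊆ lvl1
          rw [h0]; exact hsub2
        | (j+2) => exact hanti' j (by omega)
      · intro j hj
        match j with
        | 0 => exact st.part
        | 1 => exact hpart1
        | (j+2) => exact hparts' j (by omega)
      · intro j hj C hCm
        match j, hCm with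
        | 0, hCm =>
          have he : (2 * i + 0) / 2 = i := by omega
          rw [he]; exact st.size C hCm
        | 1, hCm =>
          have he : (2 * i + 1) / 2 = i := by omega
          rw [he]; exact hsize1 C hCm
        | (j+2), hCm =>
          have he : (2 * i + (j + 2)) / 2 = (2 * (i + 1) + j) / 2 := by omega
          rw [he]; exact hsizes' j (by omega) C hCm
      · intro j hj C hCm hCnot
        match j, hCm, hCnot with
        | 0, hCm, hCnot =>
          have hpow : (6:ℕ) ^ (2 * i + 0) * D₀ = 36 ^ i * D₀ := by
            rw [Nat.add_zero, pow_mul]; norm_num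
          rw [hpow]; exact hcert1 C hCm hCnot
        | 1, hCm, hCnot =>
          have hpow : (6:ℕ) ^ (2 * i + 1) * D₀ = 6 * (36 ^ i * D₀) := by
            rw [pow_succ, pow_mul]; ring_nf
          rw [hpow]
          have hCm' : C ∈ prt2 := by rw [← h0p]; exact hCm
          exact hcert2 C hCm' hCnot
        | (j+2), hCm, hCnot =>
          have he : 2 * i + (j + 2) = 2 * (i + 1) + j := by omega
          rw [he]
          exact hmerge' j (by omega) C hCm hCnot
      · exact hfin'
      · exact hmass'


end TorusAux

set_option maxHeartbeats 1000000 in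
open TorusAux in
/-- **Completing a zeroth level into a full dormitory hierarchy.**
Let `d, n, v, D₀ ≥ 1`, let `D j = 6^j D₀`, and let `A ⊆ (ℤ/nℤ)^d`.  Assume `A₀ ⊆ A`
satisfies `|A₀| ≥ 8 v (6n/D₀)^d`, and that `𝒞₀` is a partition of `A₀` whose clusters
are `⌊D₀/(12v)⌋`-connected and of cardinality at least `v`.  Then `(A₀, 𝒞₀)` can be
completed into a `(v, D)`-dormitory hierarchy `(A_j, 𝒞_j)_{j ≤ J}` on `A` with
`|A_J| ≥ |A₀| − 4 v (6n/D₀)^d`. -/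
theorem complete_dormitory_hierarchy
    (d n v D₀ : ℕ) (hd : 1 ≤ d) (hn : 1 ≤ n) (hv : 1 ≤ v) (hD₀ : 1 ≤ D₀)
    (D : ℕ → ℕ) (hD : ∀ j, D j = 6 ^ j * D₀)
    (A A₀ : Set (Fin d → ZMod n)) (hA₀A : A₀ ⊆ A)
    (hcard : 8 * (v : ℝ) * (6 * (n : ℝ) / (D₀ : ℝ)) ^ d ≤ (A₀.ncard : ℝ))
    (𝒞₀ : Set (Set (Fin d → ZMod n))) (hpart : IsPartitionOf 𝒞₀ A₀)
    (hconn : ∀ C ∈ 𝒞₀, torusRConnected (D₀ / (12 * v)) C)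
    (hcardC : ∀ C ∈ 𝒞₀, v ≤ C.ncard) :
    ∃ H : DormitoryHierarchy d n v D A, H.level 0 = A₀ ∧ H.part 0 = 𝒞₀ ∧
      (A₀.ncard : ℝ) - 4 * (v : ℝ) * (6 * (n : ℝ) / (D₀ : ℝ)) ^ d
        ≤ ((H.level H.J).ncard : ℝ) := by
  classical
  haveI : NeZero n := ⟨by omega⟩
  have st0 : DormSt d n v D₀ A₀ 0 A₀ 𝒞₀ :=
    { part := hpart
      sub := fun x hx => hx
      size := by intro C hC; simpa using hcardC C hC
      diam := by
        intro C hC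
        have hdle : torusDiam C ≤ (C.ncard - 1) * (D₀ / (12 * v)) :=
          torusDiam_le (fun x hx y hy => dist_le_card_mul' hn (hconn C hC) hx hy)
        have hrr : (D₀ / (12 * v)) * (12 * v) ≤ D₀ := Nat.div_mul_le_self _ _
        calc 12 * v * torusDiam C ≤ 12 * v * ((C.ncard - 1) * (D₀ / (12*v))) :=
              Nat.mul_le_mul_left _ hdle
          _ = (C.ncard - 1) * ((D₀/(12*v)) * (12*v)) := by ring
          _ ≤ (C.ncard - 1) * D₀ := Nat.mul_le_mul_left _ hrr
          _ ≤ C.ncard * D₀ := Nat.mul_le_mul_right _ (by omega)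
          _ = C.ncard * (18 ^ 0 * D₀) := by norm_num
      mass := by norm_num }
  have hk0 : A₀.ncard ≤ 2 ^ (0 + A₀.ncard) * v := by
    have h1 : A₀.ncard < 2 ^ A₀.ncard := Nat.lt_two_pow_self
    have h2 : 2 ^ A₀.ncard ≤ 2 ^ A₀.ncard * v := Nat.le_mul_of_pos_right _ (by omega)
    calc A₀.ncard ≤ 2 ^ A₀.ncard := le_of_lt h1
      _ ≤ 2 ^ A₀.ncard * v := h2
      _ = 2 ^ (0 + A₀.ncard) * v := by rw [Nat.zero_add]
  obtain ⟨J, lvl, prt, h0, h0p, hanti, hparts, hsizes, hmerge, hfin, hmass⟩ :=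
    tail_lemma d n v D₀ hd hn hv hD₀ A₀ hcard A₀.ncard 0 A₀ 𝒞₀ st0 hk0
  exact ⟨{
      J := J
      level := lvl
      part := prt
      level_zero_subset := by rw [h0]; exact hA₀A
      level_antitone := hanti
      part_isPartition := hparts
      card_ge := by
        intro j hj C hC
        have h := hsizes j hj C hC
        have he : 2 * 0 + j = j := by omega
        rwa [he] at h
      merge := by
        intro j hj C hC hnot
        have h := hmerge j hj C hC hnot
        have he : 2 * 0 + j = j := by omega
        rw [he] at h
        rw [hD j]
        exact h
      final := hfin }, h0, h0p, hmass⟩
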